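/- If $A_1, A_2$ are $2 \times 2$ integer matrices with determinant $\pm 1$ and $t_1, t_2 \in \mathbb{R}^2$ are such that the sets $A_i(\triangle^2(1)) + t_i$, $i = 1,2$, are disjoint and contained in $\triangle^2(s)$, then $s \ge 2$. -/

import Mathlib

/-- The open standard simplex of side length `r` in the plane (as a subset of
`Fin 2 → ℝ`). -/
def openSimplex2' (r : ℝ) : Set (Fin 2 → ℝ) :=
  {x | 0 < x 0 ∧ 0 < x 1 ∧ x 0 + x 1 < r}

/-- The image of a set under the integral affine map `x ↦ Ax + t`. -/
def affineImage2 (A : Matrix (Fin 2) (Fin 2) ℤ) (t : Fin 2 → ℝ)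
    (S : Set (Fin 2 → ℝ)) : Set (Fin 2 → ℝ) :=
  (fun x => (A.map (Int.cast : ℤ → ℝ)).mulVec x + t) '' S

lemma eps_nonneg (p q : ℝ) (h : ∀ ε : ℝ, 0 < ε → ε < 1/3 → 0 < q + ε * p) : 0 ≤ q := by
  by_contra hq
  push_neg at hq
  rcases le_or_gt p 0 with hp | hp
  · have h6 := h (1/6) (by norm_num) (by norm_num)
    nlinarith
  · have hm : 0 < min (1/6) (-q / (2 * p)) := by
      refine lt_min (by norm_num) (div_pos (by linarith) (by linarith))
    have h2 := h _ hm (lt_of_le_of_lt (min_le_left _ _) (by norm_num))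
    have h3 : min (1/6) (-q / (2 * p)) * p ≤ (-q / (2 * p)) * p :=
      mul_le_mul_of_nonneg_right (min_le_right _ _) hp.le
    have h4 : (-q / (2 * p)) * p = -q / 2 := by field_simp
    linarith

lemma classify12 (a b c d : ℤ)
    (hdet : a * d - b * c = 1 ∨ a * d - b * c = -1)
    (ha1 : -2 < a) (ha2 : a < 2) (hb1 : -2 < b) (hb2 : b < 2)
    (hc1 : -2 < c) (hc2 : c < 2) (hd1 : -2 < d) (hd2 : d < 2)
    (hac1 : -2 < a + c) (hac2 : a + c < 2)
    (hbd1 : -2 < b + d) (hbd2 : b + d < 2)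
    (hab1 : -2 < a - b) (hab2 : a - b < 2)
    (hcd1 : -2 < c - d) (hcd2 : c - d < 2)
    (hm1 : -2 < a + c - b - d) (hm2 : a + c - b - d < 2) :
    (a = 1 ∧ b = 0 ∧ c = 0 ∧ d = 1) ∨
    (a = 0 ∧ b = 1 ∧ c = 1 ∧ d = 0) ∨
    (a = -1 ∧ b = -1 ∧ c = 0 ∧ d = 1) ∨
    (a = -1 ∧ b = -1 ∧ c = 1 ∧ d = 0) ∨
    (a = 0 ∧ b = 1 ∧ c = -1 ∧ d = -1) ∨
    (a = 1 ∧ b = 0 ∧ c = -1 ∧ d = -1) ∨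
    (a = -1 ∧ b = 0 ∧ c = 0 ∧ d = -1) ∨
    (a = 0 ∧ b = -1 ∧ c = -1 ∧ d = 0) ∨
    (a = -1 ∧ b = 0 ∧ c = 1 ∧ d = 1) ∨
    (a = 0 ∧ b = -1 ∧ c = 1 ∧ d = 1) ∨
    (a = 1 ∧ b = 1 ∧ c = -1 ∧ d = 0) ∨
    (a = 1 ∧ b = 1 ∧ c = 0 ∧ d = -1) := by
  have ea : a = -1 ∨ a = 0 ∨ a = 1 := by omega
  have eb : b = -1 ∨ b = 0 ∨ b = 1 := by omega
  have ec : c = -1 ∨ c = 0 ∨ c = 1 := by omega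
  have ed : d = -1 ∨ d = 0 ∨ d = 1 := by omega
  rcases ea with rfl | rfl | rfl <;> rcases eb with rfl | rfl | rfl <;>
    rcases ec with rfl | rfl | rfl <;> rcases ed with rfl | rfl | rfl <;>
    revert hdet hac1 hac2 hbd1 hbd2 hab1 hab2 hcd1 hcd2 hm1 hm2 <;> decide

lemma key (A : Matrix (Fin 2) (Fin 2) ℤ) (t : Fin 2 → ℝ) (s : ℝ)
    (hdet : A.det = 1 ∨ A.det = -1) (hs : s < 2)
    (hsub : affineImage2 A t (openSimplex2' 1) ⊆ openSimplex2' s) :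
    ∃ u0 u1 : ℝ, 0 ≤ u0 ∧ 0 ≤ u1 ∧ u0 + u1 ≤ s - 1 ∧
      ∀ w : Fin 2 → ℝ, u0 < w 0 → u1 < w 1 → w 0 + w 1 < u0 + u1 + 1 →
        w ∈ affineImage2 A t (openSimplex2' 1) := by
  have hmem : ∀ x0 x1 : ℝ, 0 < x0 → 0 < x1 → x0 + x1 < 1 →
      0 < (A 0 0 : ℝ) * x0 + (A 0 1 : ℝ) * x1 + t 0 ∧
      0 < (A 1 0 : ℝ) * x0 + (A 1 1 : ℝ) * x1 + t 1 ∧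
      ((A 0 0 : ℝ) * x0 + (A 0 1 : ℝ) * x1 + t 0) +
        ((A 1 0 : ℝ) * x0 + (A 1 1 : ℝ) * x1 + t 1) < s := by
    intro x0 x1 hx0 hx1 hxs
    have hx : (![x0, x1] : Fin 2 → ℝ) ∈ openSimplex2' 1 :=
      ⟨by simpa using hx0, by simpa using hx1, by simpa using hxs⟩
    obtain ⟨g1, g2, g3⟩ := hsub ⟨![x0, x1], hx, rfl⟩
    simp only [Pi.add_apply, Matrix.mulVec, dotProduct, Fin.sum_univ_two,
      Matrix.map_apply, Matrix.cons_val_zero, Matrix.cons_val_one, Matrix.head_cons] at g1 g2 g3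
    exact ⟨by linarith, by linarith, by linarith⟩
  have hmk : ∀ x0 x1 : ℝ, 0 < x0 → 0 < x1 → x0 + x1 < 1 →
      ∀ w : Fin 2 → ℝ,
      w 0 = (A 0 0 : ℝ) * x0 + (A 0 1 : ℝ) * x1 + t 0 →
      w 1 = (A 1 0 : ℝ) * x0 + (A 1 1 : ℝ) * x1 + t 1 →
      w ∈ affineImage2 A t (openSimplex2' 1) := by
    intro x0 x1 hx0 hx1 hxs w hw0 hw1
    refine ⟨![x0, x1], ⟨by simpa using hx0, by simpa using hx1, by simpa using hxs⟩, ?_⟩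
    funext i
    fin_cases i <;>
      simp only [Pi.add_apply, Matrix.mulVec, dotProduct, Fin.sum_univ_two,
        Matrix.map_apply, Matrix.cons_val_zero, Matrix.cons_val_one, Matrix.head_cons,
        Fin.mk_zero, Fin.mk_one, Fin.isValue] <;>
      [linarith [hw0]; linarith [hw1]]
  -- the nine closed inequalities on the three vertices
  have h1 : 0 ≤ t 0 := eps_nonneg ((A 0 0 : ℝ) + A 0 1) _ (fun ε he1 he2 => by
    have := (hmem ε ε he1 he1 (by linarith)).1; linarith)
  have h2 : 0 ≤ t 1 := eps_nonneg ((A 1 0 : ℝ) + A 1 1) _ (fun ε he1 he2 => by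
    have := (hmem ε ε he1 he1 (by linarith)).2.1; linarith)
  have h3 : 0 ≤ s - (t 0 + t 1) :=
    eps_nonneg (-((A 0 0 : ℝ) + A 0 1 + A 1 0 + A 1 1)) _ (fun ε he1 he2 => by
      have := (hmem ε ε he1 he1 (by linarith)).2.2; linarith)
  have h4 : 0 ≤ t 0 + (A 0 0 : ℝ) :=
    eps_nonneg ((A 0 1 : ℝ) - 2 * A 0 0) _ (fun ε he1 he2 => by
      have := (hmem (1 - 2*ε) ε (by linarith) he1 (by linarith)).1; linarith)
  have h5 : 0 ≤ t 1 + (A 1 0 : ℝ) :=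
    eps_nonneg ((A 1 1 : ℝ) - 2 * A 1 0) _ (fun ε he1 he2 => by
      have := (hmem (1 - 2*ε) ε (by linarith) he1 (by linarith)).2.1; linarith)
  have h6 : 0 ≤ s - (t 0 + t 1 + (A 0 0 : ℝ) + (A 1 0 : ℝ)) :=
    eps_nonneg (2 * (A 0 0 : ℝ) + 2 * A 1 0 - A 0 1 - A 1 1) _ (fun ε he1 he2 => by
      have := (hmem (1 - 2*ε) ε (by linarith) he1 (by linarith)).2.2; linarith)
  have h7 : 0 ≤ t 0 + (A 0 1 : ℝ) :=
    eps_nonneg ((A 0 0 : ℝ) - 2 * A 0 1) _ (fun ε he1 he2 => by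
      have := (hmem ε (1 - 2*ε) he1 (by linarith) (by linarith)).1; linarith)
  have h8 : 0 ≤ t 1 + (A 1 1 : ℝ) :=
    eps_nonneg ((A 1 0 : ℝ) - 2 * A 1 1) _ (fun ε he1 he2 => by
      have := (hmem ε (1 - 2*ε) he1 (by linarith) (by linarith)).2.1; linarith)
  have h9 : 0 ≤ s - (t 0 + t 1 + (A 0 1 : ℝ) + (A 1 1 : ℝ)) :=
    eps_nonneg (2 * (A 0 1 : ℝ) + 2 * A 1 1 - A 0 0 - A 1 0) _ (fun ε he1 he2 => by
      have := (hmem ε (1 - 2*ε) he1 (by linarith) (by linarith)).2.2; linarith)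
  -- integrality bounds
  have cast_lt : ∀ m n : ℤ, ((m : ℝ) < n) → m < n := fun m n h => by exact_mod_cast h
  have ha1 : (-2 : ℤ) < A 0 0 := cast_lt _ _ (by push_cast; linarith)
  have ha2 : A 0 0 < 2 := cast_lt _ _ (by push_cast; linarith)
  have hb1 : (-2 : ℤ) < A 0 1 := cast_lt _ _ (by push_cast; linarith)
  have hb2 : A 0 1 < 2 := cast_lt _ _ (by push_cast; linarith)
  have hc1 : (-2 : ℤ) < A 1 0 := cast_lt _ _ (by push_cast; linarith)
  have hc2 : A 1 0 < 2 := cast_lt _ _ (by push_cast; linarith)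
  have hd1 : (-2 : ℤ) < A 1 1 := cast_lt _ _ (by push_cast; linarith)
  have hd2 : A 1 1 < 2 := cast_lt _ _ (by push_cast; linarith)
  have hac1 : (-2 : ℤ) < A 0 0 + A 1 0 := cast_lt _ _ (by push_cast; linarith)
  have hac2 : A 0 0 + A 1 0 < 2 := cast_lt _ _ (by push_cast; linarith)
  have hbd1 : (-2 : ℤ) < A 0 1 + A 1 1 := cast_lt _ _ (by push_cast; linarith)
  have hbd2 : A 0 1 + A 1 1 < 2 := cast_lt _ _ (by push_cast; linarith)
  have hab1 : (-2 : ℤ) < A 0 0 - A 0 1 := cast_lt _ _ (by push_cast; linarith)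
  have hab2 : A 0 0 - A 0 1 < 2 := cast_lt _ _ (by push_cast; linarith)
  have hcd1 : (-2 : ℤ) < A 1 0 - A 1 1 := cast_lt _ _ (by push_cast; linarith)
  have hcd2 : A 1 0 - A 1 1 < 2 := cast_lt _ _ (by push_cast; linarith)
  have hm1 : (-2 : ℤ) < A 0 0 + A 1 0 - A 0 1 - A 1 1 := cast_lt _ _ (by push_cast; linarith)
  have hm2 : A 0 0 + A 1 0 - A 0 1 - A 1 1 < 2 := cast_lt _ _ (by push_cast; linarith)
  have hdet' : A 0 0 * A 1 1 - A 0 1 * A 1 0 = 1 ∨ A 0 0 * A 1 1 - A 0 1 * A 1 0 = -1 := by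
    rwa [Matrix.det_fin_two] at hdet
  have hcls := classify12 (A 0 0) (A 0 1) (A 1 0) (A 1 1) hdet'
    ha1 ha2 hb1 hb2 hc1 hc2 hd1 hd2 hac1 hac2 hbd1 hbd2 hab1 hab2 hcd1 hcd2 hm1 hm2
  rcases hcls with ⟨e1,e2,e3,e4⟩|⟨e1,e2,e3,e4⟩|⟨e1,e2,e3,e4⟩|⟨e1,e2,e3,e4⟩|⟨e1,e2,e3,e4⟩|
    ⟨e1,e2,e3,e4⟩|⟨e1,e2,e3,e4⟩|⟨e1,e2,e3,e4⟩|⟨e1,e2,e3,e4⟩|⟨e1,e2,e3,e4⟩|⟨e1,e2,e3,e4⟩|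
    ⟨e1,e2,e3,e4⟩ <;>
    simp only [e1, e2, e3, e4] at h4 h5 h6 h7 h8 h9 hmk <;>
    push_cast at h4 h5 h6 h7 h8 h9 hmk
  -- U1: (1,0,0,1), up, u = t
  · refine ⟨t 0, t 1, h1, h2, by linarith, fun w hw0 hw1 hws => ?_⟩
    exact hmk (w 0 - t 0) (w 1 - t 1) (by linarith) (by linarith) (by linarith) w
      (by ring) (by ring)
  -- U2: (0,1,1,0), up, u = t
  · refine ⟨t 0, t 1, h1, h2, by linarith, fun w hw0 hw1 hws => ?_⟩
    exact hmk (w 1 - t 1) (w 0 - t 0) (by linarith) (by linarith) (by linarith) w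
      (by ring) (by ring)
  -- U3: (-1,-1,0,1), up, u = (t0-1, t1)
  · refine ⟨t 0 - 1, t 1, by linarith, h2, by linarith, fun w hw0 hw1 hws => ?_⟩
    exact hmk (t 0 + t 1 - w 0 - w 1) (w 1 - t 1) (by linarith) (by linarith) (by linarith) w
      (by ring) (by ring)
  -- U4: (-1,-1,1,0), up, u = (t0-1, t1)
  · refine ⟨t 0 - 1, t 1, by linarith, h2, by linarith, fun w hw0 hw1 hws => ?_⟩
    exact hmk (w 1 - t 1) (t 0 + t 1 - w 0 - w 1) (by linarith) (by linarith) (by linarith) w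
      (by ring) (by ring)
  -- U5: (0,1,-1,-1), up, u = (t0, t1-1)
  · refine ⟨t 0, t 1 - 1, h1, by linarith, by linarith, fun w hw0 hw1 hws => ?_⟩
    exact hmk (t 0 + t 1 - w 0 - w 1) (w 0 - t 0) (by linarith) (by linarith) (by linarith) w
      (by ring) (by ring)
  -- U6: (1,0,-1,-1), up, u = (t0, t1-1)
  · refine ⟨t 0, t 1 - 1, h1, by linarith, by linarith, fun w hw0 hw1 hws => ?_⟩
    exact hmk (w 0 - t 0) (t 0 + t 1 - w 0 - w 1) (by linarith) (by linarith) (by linarith) w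
      (by ring) (by ring)
  -- six down cases: impossible
  · exfalso; linarith
  · exfalso; linarith
  · exfalso; linarith
  · exfalso; linarith
  · exfalso; linarith
  · exfalso; linarith

/-- Two disjoint integral affine images of the open unit simplex inside the
open simplex of side `s` force `s ≥ 2`. -/
theorem two_simplex_packing_width
    (A₁ A₂ : Matrix (Fin 2) (Fin 2) ℤ)
    (h₁ : A₁.det = 1 ∨ A₁.det = -1) (h₂ : A₂.det = 1 ∨ A₂.det = -1)
    (t₁ t₂ : Fin 2 → ℝ) (s : ℝ)
    (hdisj : Disjoint (affineImage2 A₁ t₁ (openSimplex2' 1))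
      (affineImage2 A₂ t₂ (openSimplex2' 1)))
    (hsub₁ : affineImage2 A₁ t₁ (openSimplex2' 1) ⊆ openSimplex2' s)
    (hsub₂ : affineImage2 A₂ t₂ (openSimplex2' 1) ⊆ openSimplex2' s) :
    2 ≤ s := by
  by_contra hcon
  push_neg at hcon
  obtain ⟨u0, u1, hu0, hu1, hus, hU⟩ := key A₁ t₁ s h₁ hcon hsub₁
  obtain ⟨v0, v1, hv0, hv1, hvs, hV⟩ := key A₂ t₂ s h₂ hcon hsub₂
  set M0 := max u0 v0 with hM0
  set M1 := max u1 v1 with hM1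
  have hM0u : u0 ≤ M0 := le_max_left _ _
  have hM0v : v0 ≤ M0 := le_max_right _ _
  have hM1u : u1 ≤ M1 := le_max_left _ _
  have hM1v : v1 ≤ M1 := le_max_right _ _
  have hgapu : M0 + M1 < u0 + u1 + 1 := by
    rcases max_cases u0 v0 with ⟨e0, _⟩ | ⟨e0, _⟩ <;>
      rcases max_cases u1 v1 with ⟨e1, _⟩ | ⟨e1, _⟩ <;> rw [hM0, hM1, e0, e1] <;> linarith
  have hgapv : M0 + M1 < v0 + v1 + 1 := by
    rcases max_cases u0 v0 with ⟨e0, _⟩ | ⟨e0, _⟩ <;>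
      rcases max_cases u1 v1 with ⟨e1, _⟩ | ⟨e1, _⟩ <;> rw [hM0, hM1, e0, e1] <;> linarith
  set ε := (min (u0 + u1) (v0 + v1) + 1 - M0 - M1) / 3 with hε
  have hεpos : 0 < ε := by
    rcases min_cases (u0 + u1) (v0 + v1) with ⟨e, _⟩ | ⟨e, _⟩ <;> rw [hε, e] <;> linarith
  set w : Fin 2 → ℝ := ![M0 + ε, M1 + ε] with hw
  have hw0 : w 0 = M0 + ε := by simp [hw]
  have hw1 : w 1 = M1 + ε := by simp [hw]
  have hminu : min (u0 + u1) (v0 + v1) ≤ u0 + u1 := min_le_left _ _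
  have hminv : min (u0 + u1) (v0 + v1) ≤ v0 + v1 := min_le_right _ _
  have hwU : w ∈ affineImage2 A₁ t₁ (openSimplex2' 1) := by
    refine hU w (by rw [hw0]; linarith) (by rw [hw1]; linarith) (by rw [hw0, hw1]; linarith)
  have hwV : w ∈ affineImage2 A₂ t₂ (openSimplex2' 1) := by
    refine hV w (by rw [hw0]; linarith) (by rw [hw1]; linarith) (by rw [hw0, hw1]; linarith)
  exact Set.disjoint_left.mp hdisj hwU hwV
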